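/- arXiv:1809.03866 — 3 statements merged into one kernel-verified Lean document; each statement's English description precedes it below -/
import Mathlib

section
/- Suppose B, β, μ > 0 and α, d ≥ 0. Let (Ω, ℱ, P) be a probability space and let T₁, T₂, T₃ : Ω → ℝ be nonnegative random variables such that T₁ and T₂ are independent and P(T₂ > 0) > 0. Set S₀* = B/μ, K̂₀ = 4 + S₀*, ε₁ = E[exp(−μT₁)], ε₁₂ = E[exp(−μ(T₁+T₂))], ε₃ = E[exp(−μT₃)]. Assume the basic reproduction number R₀ = (β·S₀*·K̂₀ + α)/(μ+d+α) satisfies R₀ > 1, and assume ε₁₂ ≥ (K̂₀ + α/(β·S₀*))/g(0). Then there exists a unique triple (S*, E*, I*) with S* > 0, E* > 0, I* > 0 satisfying the endemic steady-state equations: B − β·S*·ε₁·G(I*) − μ·S* + α·I*·ε₃ = 0; β·S*·ε₁·G(I*) − μ·E* − β·S*·ε₁₂·G(I*) = 0; and β·S*·ε₁₂·G(I*) − (μ+d+α)·I* = 0. -/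
set_option maxHeartbeats 1000000


open MeasureTheory

private lemma aux_integrable_exp {Ω : Type*} [MeasurableSpace Ω] (P : Measure Ω)
    [IsProbabilityMeasure P] {t : Ω → ℝ} (ht : Measurable t) (htn : ∀ ω, 0 ≤ t ω)
    {μ : ℝ} (hμ : 0 < μ) :
    Integrable (fun ω => Real.exp (-μ * t ω)) P := by
  refine (integrable_const (1 : ℝ)).mono'
    ((Real.measurable_exp.comp (ht.const_mul (-μ))).aestronglyMeasurable) ?_
  refine Filter.Eventually.of_forall fun ω => ?_
  rw [Real.norm_eq_abs, abs_of_pos (Real.exp_pos _)]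
  have h := htn ω
  calc Real.exp (-μ * t ω) ≤ Real.exp 0 := Real.exp_le_exp.2 (by nlinarith)
    _ = 1 := Real.exp_zero

/-- Theorem 5.1 of the paper: existence and uniqueness of the positive endemic
equilibrium of the deterministic SEIRS malaria model with arbitrarily distributed
random delays `T₁`, `T₂`, `T₃`. -/
theorem endemic_equilibrium_random_delays
    {Ω : Type*} [MeasurableSpace Ω] (P : Measure Ω) [IsProbabilityMeasure P]
    (T₁ T₂ T₃ : Ω → ℝ)
    (hT₁meas : Measurable T₁) (hT₂meas : Measurable T₂) (hT₃meas : Measurable T₃)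
    (hT₁nn : ∀ ω, 0 ≤ T₁ ω) (hT₂nn : ∀ ω, 0 ≤ T₂ ω) (hT₃nn : ∀ ω, 0 ≤ T₃ ω)
    (hindep : ProbabilityTheory.IndepFun T₁ T₂ P)
    (hT₂pos : 0 < P {ω | 0 < T₂ ω})
    (G g : ℝ → ℝ)
    (hderiv : ∀ x ≥ (0:ℝ), HasDerivAt G (g x) x)
    (hG0 : G 0 = 0)
    (hGmono : StrictMonoOn G (Set.Ici (0:ℝ)))
    (hganti : StrictAntiOn g (Set.Ici (0:ℝ)))
    (B β μ α d : ℝ) (hB : 0 < B) (hβ : 0 < β) (hμ : 0 < μ)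
    (hα : 0 ≤ α) (hd : 0 ≤ d)
    (S₀ K₀ ε₁ ε₁₂ ε₃ : ℝ)
    (hS₀ : S₀ = B / μ) (hK₀ : K₀ = 4 + S₀)
    (hε₁ : ε₁ = ∫ ω, Real.exp (-μ * T₁ ω) ∂P)
    (hε₁₂ : ε₁₂ = ∫ ω, Real.exp (-μ * (T₁ ω + T₂ ω)) ∂P)
    (hε₃ : ε₃ = ∫ ω, Real.exp (-μ * T₃ ω) ∂P)
    (hR₀ : 1 < (β * S₀ * K₀ + α) / (μ + d + α))
    (hcond : (K₀ + α / (β * S₀)) / g 0 ≤ ε₁₂) :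
    ∃! p : ℝ × ℝ × ℝ,
      0 < p.1 ∧ 0 < p.2.1 ∧ 0 < p.2.2 ∧
      B - β * p.1 * ε₁ * G p.2.2 - μ * p.1 + α * p.2.2 * ε₃ = 0 ∧
      β * p.1 * ε₁ * G p.2.2 - μ * p.2.1 - β * p.1 * ε₁₂ * G p.2.2 = 0 ∧
      β * p.1 * ε₁₂ * G p.2.2 - (μ + d + α) * p.2.2 = 0 := by
  have hμdα : 0 < μ + d + α := by linarith
  have hS₀pos : 0 < S₀ := by rw [hS₀]; positivity
  -- integral facts
  have hint₁ : Integrable (fun ω => Real.exp (-μ * T₁ ω)) P :=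
    aux_integrable_exp P hT₁meas hT₁nn hμ
  have hint₁₂ : Integrable (fun ω => Real.exp (-μ * (T₁ ω + T₂ ω))) P :=
    aux_integrable_exp P (hT₁meas.add hT₂meas) (fun ω => add_nonneg (hT₁nn ω) (hT₂nn ω)) hμ
  have hint₃ : Integrable (fun ω => Real.exp (-μ * T₃ ω)) P :=
    aux_integrable_exp P hT₃meas hT₃nn hμ
  have hε₁₂pos : 0 < ε₁₂ := by
    rw [hε₁₂, integral_pos_iff_support_of_nonneg (fun ω => (Real.exp_pos _).le) hint₁₂]
    have hsupp : Function.support (fun ω => Real.exp (-μ * (T₁ ω + T₂ ω))) = Set.univ := by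
      ext ω; simp [Function.support, (Real.exp_pos _).ne']
    rw [hsupp]
    simp
  have hε₃nn : 0 ≤ ε₃ := by
    rw [hε₃]; exact integral_nonneg fun ω => (Real.exp_pos _).le
  have hε₃le1 : ε₃ ≤ 1 := by
    rw [hε₃]
    calc ∫ ω, Real.exp (-μ * T₃ ω) ∂P ≤ ∫ _ω, (1:ℝ) ∂P := by
          refine integral_mono hint₃ (integrable_const 1) fun ω => ?_
          have h := hT₃nn ω
          calc Real.exp (-μ * T₃ ω) ≤ Real.exp 0 := Real.exp_le_exp.2 (by nlinarith)
            _ = 1 := Real.exp_zero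
      _ = 1 := by simp
  have hε₁gt : ε₁₂ < ε₁ := by
    have hkey : 0 < ∫ ω, (Real.exp (-μ * T₁ ω) - Real.exp (-μ * (T₁ ω + T₂ ω))) ∂P := by
      have hfnn : ∀ ω, 0 ≤ Real.exp (-μ * T₁ ω) - Real.exp (-μ * (T₁ ω + T₂ ω)) := fun ω =>
        sub_nonneg.2 (Real.exp_le_exp.2 (by nlinarith [hT₂nn ω]))
      rw [integral_pos_iff_support_of_nonneg hfnn (hint₁.sub hint₁₂)]
      refine lt_of_lt_of_le hT₂pos (measure_mono fun ω hω => ?_)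
      have hω' : 0 < T₂ ω := hω
      have hlt : Real.exp (-μ * (T₁ ω + T₂ ω)) < Real.exp (-μ * T₁ ω) :=
        Real.exp_lt_exp.2 (by nlinarith)
      simp only [Function.mem_support]
      intro hcontra
      rw [sub_eq_zero] at hcontra
      exact absurd hcontra (ne_of_gt hlt)
    rw [hε₁, hε₁₂, ← sub_pos, ← integral_sub hint₁ hint₁₂]
    exact hkey
  -- derivative facts
  have hgnonneg : ∀ x ≥ (0:ℝ), 0 ≤ g x := by
    intro x hx
    have h := hasDerivAt_iff_tendsto_slope.1 (hderiv x hx)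
    have h' : Filter.Tendsto (slope G x) (nhdsWithin x (Set.Ioi x)) (nhds (g x)) :=
      h.mono_left (nhdsWithin_mono x fun y hy => ne_of_gt hy)
    refine ge_of_tendsto h' ?_
    filter_upwards [self_mem_nhdsWithin] with y hy
    have hy' : x < y := hy
    have hpos : 0 < slope G x y := by
      rw [slope_def_field]
      exact div_pos (sub_pos.2 (hGmono hx (le_trans hx hy'.le) hy')) (sub_pos.2 hy')
    exact hpos.le
  have hg0pos : 0 < g 0 :=
    lt_of_le_of_lt (hgnonneg 1 zero_le_one)
      (hganti Set.self_mem_Ici (Set.mem_Ici.2 zero_le_one) zero_lt_one)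
  have hGcont : ContinuousOn G (Set.Ici 0) := fun x hx =>
    ((hderiv x hx).continuousAt).continuousWithinAt
  have hconc : StrictConcaveOn ℝ (Set.Ici (0:ℝ)) G := by
    apply StrictAntiOn.strictConcaveOn_of_deriv (convex_Ici 0) hGcont
    rw [interior_Ici]
    intro x hx y hy hxy
    rw [(hderiv x (le_of_lt hx)).deriv, (hderiv y (le_of_lt hy)).deriv]
    exact hganti (Set.mem_Ici.2 (le_of_lt hx)) (Set.mem_Ici.2 (le_of_lt hy)) hxy
  have hGpos : ∀ x > (0:ℝ), 0 < G x := by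
    intro x hx
    have h := hGmono Set.self_mem_Ici (Set.mem_Ici.2 hx.le) hx
    rwa [hG0] at h
  have hkeyineq : ∀ x y : ℝ, 0 < x → x < y → x * G y < y * G x := by
    intro x y hx hxy
    have hy : 0 < y := hx.trans hxy
    have hxy1 : x / y < 1 := (div_lt_one hy).2 hxy
    have hab : (0:ℝ) < x / y := by positivity
    have hba : (0:ℝ) < 1 - x / y := by linarith
    have hsum : x / y + (1 - x / y) = 1 := by ring
    have h := hconc.2 (Set.mem_Ici.2 hy.le) Set.self_mem_Ici (ne_of_gt hy) hab hba hsum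
    simp only [smul_eq_mul, hG0, mul_zero, add_zero] at h
    have hxx : x / y * y = x := by field_simp
    rw [hxx] at h
    have h2 : x / y * G y < G x := by linarith
    have h3 := mul_lt_mul_of_pos_right h2 hy
    have h4 : x / y * G y * y = x * G y := by field_simp
    linarith [h4 ▸ h3]
  -- constants
  set c : ℝ := μ * (μ + d + α) / (β * ε₁₂) with hc
  set k : ℝ := ε₁ * (μ + d + α) / ε₁₂ - α * ε₃ with hk
  clear_value c k
  have hcpos : 0 < c := by rw [hc]; exact div_pos (mul_pos hμ hμdα) (mul_pos hβ hε₁₂pos)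
  have hkpos : 0 < k := by
    have h1 : μ + d + α < ε₁ * (μ + d + α) / ε₁₂ := by
      rw [lt_div_iff₀ hε₁₂pos]; nlinarith
    have h2 : α * ε₃ ≤ α := by nlinarith
    rw [hk]; linarith
  set F : ℝ → ℝ := fun I => B - k * I - c * I / G I with hF
  clear_value F
  have hFanti : StrictAntiOn F (Set.Ioi (0:ℝ)) := by
    intro x hx y hy hxy
    have hx' : (0:ℝ) < x := hx
    have hy' : (0:ℝ) < y := hy
    have hGx := hGpos x hx'
    have hGy := hGpos y hy'
    have hdiv : x / G x < y / G y := by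
      rw [div_lt_div_iff₀ hGx hGy]; exact hkeyineq x y hx' hxy
    have h1 : c * (x / G x) < c * (y / G y) := (mul_lt_mul_iff_right₀ hcpos).2 hdiv
    have h2 : k * x < k * y := (mul_lt_mul_iff_right₀ hkpos).2 hxy
    simp only [hF]
    rw [mul_div_assoc, mul_div_assoc]
    linarith
  -- limit of F at 0⁺
  have hslope : Filter.Tendsto (fun I => G I / I) (nhdsWithin 0 (Set.Ioi 0)) (nhds (g 0)) := by
    have h := hasDerivAt_iff_tendsto_slope.1 (hderiv 0 le_rfl)
    have h' : Filter.Tendsto (slope G 0) (nhdsWithin 0 (Set.Ioi 0)) (nhds (g 0)) :=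
      h.mono_left (nhdsWithin_mono 0 fun y hy => ne_of_gt hy)
    refine h'.congr fun y => ?_
    rw [slope_def_field, hG0, sub_zero, sub_zero]
  have h1 : Filter.Tendsto (fun I => I / G I) (nhdsWithin 0 (Set.Ioi 0)) (nhds (g 0)⁻¹) := by
    have h := hslope.inv₀ (ne_of_gt hg0pos)
    refine h.congr fun y => ?_
    rw [inv_div]
  have hlimF : Filter.Tendsto F (nhdsWithin 0 (Set.Ioi 0)) (nhds (B - k * 0 - c * (g 0)⁻¹)) := by
    have h2 : Filter.Tendsto (fun I : ℝ => k * I) (nhdsWithin 0 (Set.Ioi 0)) (nhds (k * 0)) :=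
      ((continuous_mul_left k).tendsto 0).mono_left nhdsWithin_le_nhds
    have h3 : Filter.Tendsto (fun I => c * (I / G I)) (nhdsWithin 0 (Set.Ioi 0))
        (nhds (c * (g 0)⁻¹)) := h1.const_mul c
    refine ((tendsto_const_nhds.sub h2).sub h3).congr fun I => ?_
    simp only [hF]
    rw [mul_div_assoc]
  -- the limit is positive
  have hβS₀K : μ + d < β * S₀ * K₀ := by
    have h := (one_lt_div hμdα).1 hR₀
    linarith
  have hcond' : K₀ + α / (β * S₀) ≤ g 0 * ε₁₂ := by
    rw [div_le_iff₀ hg0pos] at hcond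
    linarith
  have hS₀B : B = μ * S₀ := by rw [hS₀]; field_simp
  have hβne : β ≠ 0 := ne_of_gt hβ
  have hS₀ne : S₀ ≠ 0 := ne_of_gt hS₀pos
  have hε₁₂ne : ε₁₂ ≠ 0 := ne_of_gt hε₁₂pos
  have step : μ * (μ + d + α) < B * g 0 * (β * ε₁₂) := by
    have ha : B * β * (K₀ + α / (β * S₀)) ≤ B * β * (g 0 * ε₁₂) :=
      mul_le_mul_of_nonneg_left hcond' (by positivity)
    have hb : B * β * (K₀ + α / (β * S₀)) = μ * (β * S₀ * K₀ + α) := by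
      rw [hS₀B]; field_simp
    nlinarith
  have hcB : c < B * g 0 := by
    rw [hc, div_lt_iff₀ (mul_pos hβ hε₁₂pos)]
    exact step
  have hLpos : 0 < B - k * 0 - c * (g 0)⁻¹ := by
    have hinv : 0 < (g 0)⁻¹ := inv_pos.2 hg0pos
    have hcc : c * (g 0)⁻¹ < B := by
      nlinarith [mul_inv_cancel₀ (ne_of_gt hg0pos)]
    rw [mul_zero]
    linarith
  -- choose endpoints and apply IVT
  set I₁ : ℝ := (B + 1) / k with hI₁
  clear_value I₁
  have hI₁pos : 0 < I₁ := hI₁ ▸ div_pos (by linarith : (0:ℝ) < B + 1) hkpos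
  have hev : ∀ᶠ I in nhdsWithin 0 (Set.Ioi 0), 0 < F I :=
    hlimF.eventually (eventually_gt_nhds hLpos)
  have hev2 : ∀ᶠ I in nhdsWithin (0:ℝ) (Set.Ioi 0), I < I₁ :=
    Filter.Eventually.filter_mono nhdsWithin_le_nhds (eventually_lt_nhds hI₁pos)
  obtain ⟨I₀, hI₀F, hI₀lt, hI₀pos⟩ := (hev.and (hev2.and self_mem_nhdsWithin)).exists
  have hI₀pos' : (0:ℝ) < I₀ := hI₀pos
  have hkne : k ≠ 0 := ne_of_gt hkpos
  have hFI₁ : F I₁ < 0 := by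
    have h1 : k * I₁ = B + 1 := by rw [hI₁]; field_simp
    have h2 : 0 < c * I₁ / G I₁ := div_pos (mul_pos hcpos hI₁pos) (hGpos _ hI₁pos)
    simp only [hF]
    linarith
  have hsub : Set.Icc I₀ I₁ ⊆ Set.Ioi 0 := fun x hx => lt_of_lt_of_le hI₀pos' hx.1
  have hFcont : ContinuousOn F (Set.Icc I₀ I₁) := by
    simp only [hF]
    refine (continuousOn_const.sub (continuousOn_const.mul continuousOn_id)).sub ?_
    exact (continuousOn_const.mul continuousOn_id).div
      (hGcont.mono fun x hx => Set.mem_Ici.2 (le_of_lt (hsub hx)))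
      (fun x hx => ne_of_gt (hGpos x (hsub hx)))
  obtain ⟨I, hImem, hFI⟩ :=
    intermediate_value_Icc' hI₀lt.le hFcont ⟨hFI₁.le, hI₀F.le⟩
  have hIpos : 0 < I := hsub hImem
  have hGI : 0 < G I := hGpos I hIpos
  have hGIne : G I ≠ 0 := ne_of_gt hGI
  have hμne : μ ≠ 0 := ne_of_gt hμ
  -- define the equilibrium
  set S : ℝ := (μ + d + α) * I / (β * ε₁₂ * G I) with hS
  set E : ℝ := (ε₁ - ε₁₂) * (μ + d + α) * I / (μ * ε₁₂) with hE
  clear_value S E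
  have hSpos : 0 < S := hS ▸
    div_pos (mul_pos hμdα hIpos) (mul_pos (mul_pos hβ hε₁₂pos) hGI)
  have hEpos : 0 < E := hE ▸
    div_pos (mul_pos (mul_pos (sub_pos.2 hε₁gt) hμdα) hIpos) (mul_pos hμ hε₁₂pos)
  have hFI' : B - (ε₁ * (μ + d + α) / ε₁₂ - α * ε₃) * I
      - μ * (μ + d + α) / (β * ε₁₂) * I / G I = 0 := by
    have h := hFI
    simp only [hF, hk, hc] at h
    exact h
  have heq3 : β * S * ε₁₂ * G I - (μ + d + α) * I = 0 := by
    rw [hS]; field_simp; ring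
  have heq2 : β * S * ε₁ * G I - μ * E - β * S * ε₁₂ * G I = 0 := by
    rw [hS, hE]; field_simp; ring
  have heq1 : B - β * S * ε₁ * G I - μ * S + α * I * ε₃ = 0 := by
    rw [hS]
    field_simp at hFI' ⊢
    apply mul_left_cancel₀ hε₁₂ne
    linear_combination ε₁₂ * hFI'
  refine ⟨(S, E, I), ⟨hSpos, hEpos, hIpos, heq1, heq2, heq3⟩, ?_⟩
  rintro ⟨S', E', I'⟩ ⟨hS'pos, hE'pos, hI'pos, hq1, hq2, hq3⟩
  simp only at hq1 hq2 hq3 hS'pos hE'pos hI'pos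
  have hGI' : 0 < G I' := hGpos I' hI'pos
  have hGI'ne : G I' ≠ 0 := ne_of_gt hGI'
  have hS'eq : S' = (μ + d + α) * I' / (β * ε₁₂ * G I') := by
    field_simp
    linear_combination hq3
  have hFq : F I' = 0 := by
    simp only [hF, hk, hc]
    rw [hS'eq] at hq1
    field_simp at hq1 ⊢
    linear_combination hq1
  have hI'I : I' = I :=
    hFanti.injOn (Set.mem_Ioi.2 hI'pos) (Set.mem_Ioi.2 hIpos) (by rw [hFq, hFI])
  have hS'S : S' = S := by rw [hS'eq, hI'I, hS]
  have hE'E : E' = E := by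
    rw [hE]
    rw [hS'S, hI'I] at hq2
    rw [hS] at hq2
    field_simp at hq2 ⊢
    apply mul_left_cancel₀ (mul_ne_zero hβne hGIne)
    linear_combination -(β * G I) * hq2
  rw [Prod.mk.injEq, Prod.mk.injEq]
  exact ⟨hS'S, hE'E, hI'I⟩
end

section
/- Suppose B, β, μ > 0, α, d ≥ 0, and the delays satisfy T₁ ≥ 0, T₂ > 0, T₃ ≥ 0. Set S₀* = B/μ and R₀* = β·S₀*/(μ+d+α). Assume R₀* > 1 and T₁ + T₂ ≤ (1/μ)·log(g(0)). Then there exists a unique triple (S*, E*, I*) with S* > 0, E* > 0, I* > 0 satisfying: B − β·S*·e^{−μT₁}·G(I*) − μ·S* + α·I*·e^{−μT₃} = 0; β·S*·e^{−μT₁}·G(I*) − μ·E* − β·S*·e^{−μ(T₁+T₂)}·G(I*) = 0; and β·S*·e^{−μ(T₁+T₂)}·G(I*) − (μ+d+α)·I* = 0. -/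
set_option maxHeartbeats 2000000


/-- Theorem 5.2 of the paper: existence and uniqueness of the positive endemic
equilibrium of the deterministic SEIRS malaria model with constant delays
`T₁`, `T₂`, `T₃`. -/
theorem endemic_equilibrium_constant_delays
    (G g : ℝ → ℝ)
    (hderiv : ∀ x ≥ (0:ℝ), HasDerivAt G (g x) x)
    (hG0 : G 0 = 0)
    (hGmono : StrictMonoOn G (Set.Ici (0:ℝ)))
    (hganti : StrictAntiOn g (Set.Ici (0:ℝ)))
    (B β μ α d T₁ T₂ T₃ : ℝ) (hB : 0 < B) (hβ : 0 < β) (hμ : 0 < μ)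
    (hα : 0 ≤ α) (hd : 0 ≤ d)
    (hT₁ : 0 ≤ T₁) (hT₂ : 0 < T₂) (hT₃ : 0 ≤ T₃)
    (S₀ : ℝ) (hS₀ : S₀ = B / μ)
    (hR₀ : 1 < β * S₀ / (μ + d + α))
    (hcond : T₁ + T₂ ≤ (1 / μ) * Real.log (g 0)) :
    ∃! p : ℝ × ℝ × ℝ,
      0 < p.1 ∧ 0 < p.2.1 ∧ 0 < p.2.2 ∧
      B - β * p.1 * Real.exp (-μ * T₁) * G p.2.2 - μ * p.1
        + α * p.2.2 * Real.exp (-μ * T₃) = 0 ∧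
      β * p.1 * Real.exp (-μ * T₁) * G p.2.2 - μ * p.2.1
        - β * p.1 * Real.exp (-μ * (T₁ + T₂)) * G p.2.2 = 0 ∧
      β * p.1 * Real.exp (-μ * (T₁ + T₂)) * G p.2.2 - (μ + d + α) * p.2.2 = 0 := by
  have hμdα : 0 < μ + d + α := by linarith
  have hM : 0 < μ * (μ + d + α) := mul_pos hμ hμdα
  have hT12 : 0 < T₁ + T₂ := by linarith
  set e1 := Real.exp (-μ * T₁) with he1def
  set e2 := Real.exp (-μ * (T₁ + T₂)) with he2def
  set e3 := Real.exp (-μ * T₃) with he3def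
  set eT := Real.exp (μ * T₂) with heTdef
  have he1pos : 0 < e1 := Real.exp_pos _
  have he2pos : 0 < e2 := Real.exp_pos _
  have he3pos : 0 < e3 := Real.exp_pos _
  have heTpos : 0 < eT := Real.exp_pos _
  have he12 : e1 = e2 * eT := by
    rw [he1def, he2def, heTdef, ← Real.exp_add]
    congr 1; ring
  have he2inv : e2 * Real.exp (μ * (T₁ + T₂)) = 1 := by
    rw [he2def, ← Real.exp_add, show -μ * (T₁ + T₂) + μ * (T₁ + T₂) = 0 by ring,
      Real.exp_zero]
  have he3le1 : e3 ≤ 1 := by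
    rw [he3def]
    exact Real.exp_le_one_iff.mpr (by nlinarith)
  have heT1 : 1 < eT := by
    rw [heTdef]
    have := Real.add_one_le_exp (μ * T₂)
    nlinarith
  -- continuity of G on [0, ∞)
  have hGcont : ContinuousOn G (Set.Ici (0:ℝ)) := fun x hx =>
    (hderiv x hx).continuousAt.continuousWithinAt
  -- mean value theorem helper
  have hMVT : ∀ a b : ℝ, 0 ≤ a → a < b →
      ∃ z ∈ Set.Ioo a b, g z = (G b - G a) / (b - a) := by
    intro a b ha hab
    exact exists_hasDerivAt_eq_slope G g hab
      (hGcont.mono (fun x hx => le_trans ha hx.1))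
      (fun x hx => hderiv x (le_trans ha hx.1.le))
  have hGpos : ∀ I : ℝ, 0 < I → 0 < G I := by
    intro I hI
    have := hGmono (Set.mem_Ici.mpr le_rfl) (Set.mem_Ici.mpr hI.le) hI
    linarith [hG0 ▸ this]
  -- g 0 > 0
  have hg0pos : 0 < g 0 := by
    obtain ⟨z, hz, hzeq⟩ := hMVT 0 1 le_rfl one_pos
    have hGz : 0 < G 1 := hGpos 1 one_pos
    have hgz : 0 < g z := by rw [hzeq, hG0]; norm_num; linarith
    have := hganti (Set.mem_Ici.mpr le_rfl) (Set.mem_Ici.mpr hz.1.le) hz.1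
    linarith
  -- exp (μ (T₁+T₂)) ≤ g 0
  have hg1 : Real.exp (μ * (T₁ + T₂)) ≤ g 0 := by
    have hlog : μ * (T₁ + T₂) ≤ Real.log (g 0) := by
      have h := mul_le_mul_of_nonneg_left hcond hμ.le
      have h2 : μ * ((1 / μ) * Real.log (g 0)) = Real.log (g 0) := by
        field_simp
      linarith [h2 ▸ h]
    calc Real.exp (μ * (T₁ + T₂)) ≤ Real.exp (Real.log (g 0)) :=
          Real.exp_le_exp.mpr hlog
      _ = g 0 := Real.exp_log hg0pos
  set c := (μ + d + α) * eT - α * e3 with hcdef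
  have hc : 0 < c := by
    have h1 : α * e3 ≤ α * 1 := mul_le_mul_of_nonneg_left he3le1 hα
    have h2 : (μ + d + α) * 1 < (μ + d + α) * eT :=
      mul_lt_mul_of_pos_left heT1 hμdα
    rw [hcdef]; nlinarith
  have hBc : 0 < B / c := div_pos hB hc
  set ψ : ℝ → ℝ := fun I => β * e2 * ((B - c * I) * G I) - μ * (μ + d + α) * I
    with hψdef
  have hψ0 : ψ 0 = 0 := by show β * e2 * ((B - c * 0) * G 0) - _ = 0; rw [hG0]; ring
  -- any positive root has B - c I > 0
  have hBcI : ∀ I : ℝ, 0 < I → ψ I = 0 → 0 < B - c * I := by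
    intro I hI hψI
    have hG := hGpos I hI
    have hψI' : β * e2 * ((B - c * I) * G I) - μ * (μ + d + α) * I = 0 := hψI
    by_contra h
    push_neg at h
    nlinarith [mul_pos hM hI, mul_pos (mul_pos hβ he2pos) hG]
  -- strict concavity consequence
  have hconc : ∀ x y : ℝ, 0 < x → x < y → x * G y < y * G x := by
    intro x y hx hxy
    obtain ⟨z1, hz1, hz1e⟩ := hMVT 0 x le_rfl hx
    obtain ⟨z2, hz2, hz2e⟩ := hMVT x y hx.le hxy
    have hz20 : (0:ℝ) ≤ z2 := by linarith [hz1.2, hz2.1]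
    have hgz : g z2 < g z1 :=
      hganti (Set.mem_Ici.mpr hz1.1.le) (Set.mem_Ici.mpr hz20) (lt_trans hz1.2 hz2.1)
    have hGx : G x = x * g z1 := by
      rw [hz1e, hG0, sub_zero, sub_zero, mul_div_assoc', eq_div_iff hx.ne']; ring
    have hGy : g z2 * (y - x) = G y - G x := by
      rw [hz2e, div_mul_cancel₀ _ (sub_ne_zero.mpr hxy.ne')]
    nlinarith [mul_pos (mul_pos (sub_pos.mpr hxy) hx) (sub_pos.mpr hgz)]
  -- uniqueness of positive roots of ψ
  have hcore : ∀ x y : ℝ, 0 < x → x < y → ψ x = 0 → ψ y = 0 → False := by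
    intro x y hx hxy hψx hψy
    have hy : 0 < y := lt_trans hx hxy
    have hBx := hBcI x hx hψx
    have hBy := hBcI y hy hψy
    have hGx := hGpos x hx
    have hGy := hGpos y hy
    have hcc := hconc x y hx hxy
    have hψx' : β * e2 * ((B - c * x) * G x) - μ * (μ + d + α) * x = 0 := hψx
    have hψy' : β * e2 * ((B - c * y) * G y) - μ * (μ + d + α) * y = 0 := hψy
    have h0 : β * e2 * (y * ((B - c * x) * G x) - x * ((B - c * y) * G y)) = 0 := by
      linear_combination y * hψx' - x * hψy'
    have hne : β * e2 ≠ 0 := (mul_pos hβ he2pos).ne'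
    have heq : y * ((B - c * x) * G x) = x * ((B - c * y) * G y) := by
      have := (mul_eq_zero.mp h0).resolve_left hne
      linarith
    have h4 : (B - c * x) * (x * G y) < (B - c * x) * (y * G x) :=
      mul_lt_mul_of_pos_left hcc hBx
    have h5 : (B - c * y) * (x * G y) < (B - c * x) * (x * G y) := by
      apply mul_lt_mul_of_pos_right _ (mul_pos hx hGy)
      nlinarith [mul_lt_mul_of_pos_left hxy hc]
    nlinarith
  have huniq : ∀ x y : ℝ, 0 < x → ψ x = 0 → 0 < y → ψ y = 0 → x = y := by
    intro x y hx hψx hy hψy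
    rcases lt_trichotomy x y with h | h | h
    · exact absurd (hcore x y hx h hψx hψy) (by simp)
    · exact h
    · exact absurd (hcore y x hy h hψy hψx) (by simp)
  -- derivative of ψ at 0 is positive
  have hd1 : HasDerivAt (fun I : ℝ => (B - c * I) * G I) (B * g 0) 0 := by
    have h1 : HasDerivAt (fun I : ℝ => B - c * I) (-c) 0 := by
      simpa using ((hasDerivAt_id (0:ℝ)).const_mul c).const_sub B
    have h2 := h1.mul (hderiv 0 le_rfl)
    exact (by simpa [hG0] using h2 : HasDerivAt ((fun I : ℝ => B - c * I) * G) (B * g 0) 0)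
  have hdψ : HasDerivAt ψ (β * e2 * (B * g 0) - μ * (μ + d + α)) 0 := by
    have h2 := (hd1.const_mul (β * e2)).sub
      ((hasDerivAt_id (0:ℝ)).const_mul (μ * (μ + d + α)))
    exact (by simpa [hψdef] using h2 : HasDerivAt ((fun y : ℝ => β * e2 * ((B - c * y) * G y)) - fun y : ℝ => μ * (μ + d + α) * y) (β * e2 * (B * g 0) - μ * (μ + d + α)) 0)
  have hβB : μ * (μ + d + α) < β * B := by
    rw [hS₀] at hR₀
    have h1 : μ + d + α < β * (B / μ) := (one_lt_div hμdα).mp hR₀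
    have h2 : β * (B / μ) * μ = β * B := by field_simp
    nlinarith [mul_lt_mul_of_pos_right h1 hμ]
  have he2g : 1 ≤ e2 * g 0 := by
    calc (1:ℝ) = e2 * Real.exp (μ * (T₁ + T₂)) := he2inv.symm
      _ ≤ e2 * g 0 := mul_le_mul_of_nonneg_left hg1 he2pos.le
  have hD0 : 0 < β * e2 * (B * g 0) - μ * (μ + d + α) := by
    nlinarith [mul_le_mul_of_nonneg_left he2g (mul_pos hβ hB).le]
  -- find a small point where ψ is positive
  rw [hasDerivAt_iff_tendsto_slope] at hdψ
  have hev : ∀ᶠ x in nhdsWithin (0:ℝ) {(0:ℝ)}ᶜ, 0 < slope ψ 0 x :=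
    hdψ.eventually (eventually_gt_nhds hD0)
  have hmono : nhdsWithin (0:ℝ) (Set.Ioi 0) ≤ nhdsWithin (0:ℝ) {(0:ℝ)}ᶜ :=
    nhdsWithin_mono 0 (fun x hx => ne_of_gt hx)
  have hev2 : ∀ᶠ x in nhdsWithin (0:ℝ) (Set.Ioi 0), x < B / c := by
    filter_upwards [Ioo_mem_nhdsGT_of_mem (Set.mem_Ico.mpr ⟨le_rfl, hBc⟩)] with x hx
    exact hx.2
  have hev3 : ∀ᶠ x in nhdsWithin (0:ℝ) (Set.Ioi 0), 0 < x :=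
    eventually_mem_nhdsWithin
  obtain ⟨a, hsl, haB, ha0⟩ := ((hev.filter_mono hmono).and (hev2.and hev3)).exists
  have hψa : 0 < ψ a := by
    have hs : slope ψ 0 a = ψ a / a := by
      rw [slope_def_field, hψ0]; ring_nf
    rw [hs] at hsl
    rcases div_pos_iff.mp hsl with ⟨h1, _⟩ | ⟨_, h2⟩
    · exact h1
    · linarith
  have hψB : ψ (B / c) < 0 := by
    have h0 : B - c * (B / c) = 0 := by field_simp; ring
    show β * e2 * ((B - c * (B / c)) * G (B / c)) - μ * (μ + d + α) * (B / c) < 0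
    rw [h0]
    simpa using mul_pos hM hBc
  have hψcont : ContinuousOn ψ (Set.Icc a (B / c)) := by
    apply ContinuousOn.sub
    · exact continuousOn_const.mul
        (((continuousOn_const.sub (continuousOn_const.mul continuousOn_id)).mul
          (hGcont.mono (fun x hx => le_trans ha0.le hx.1))))
    · exact continuousOn_const.mul continuousOn_id
  obtain ⟨I, hImem, hψI⟩ := intermediate_value_Icc' haB.le hψcont
    (Set.mem_Icc.mpr ⟨hψB.le, hψa.le⟩)
  have hI0 : 0 < I := lt_of_lt_of_le ha0 hImem.1
  have hBI := hBcI I hI0 hψI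
  have hGI := hGpos I hI0
  have hψI' : β * e2 * ((B - c * I) * G I) - μ * (μ + d + α) * I = 0 := hψI
  set S := (B - c * I) / μ with hSdef
  have hμS : μ * S = B - c * I := by rw [hSdef]; field_simp
  have hSpos : 0 < S := div_pos hBI hμ
  have he12' : e2 < e1 := by
    calc e2 = e2 * 1 := (mul_one e2).symm
      _ < e2 * eT := mul_lt_mul_of_pos_left heT1 he2pos
      _ = e1 := he12.symm
  set E := β * S * (e1 - e2) * G I / μ with hEdef
  have hμE : μ * E = β * S * (e1 - e2) * G I := by rw [hEdef]; field_simp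
  have hEpos : 0 < E := by
    rw [hEdef]
    exact div_pos (mul_pos (mul_pos (mul_pos hβ hSpos) (sub_pos.mpr he12')) hGI) hμ
  have key3 : β * S * e2 * G I - (μ + d + α) * I = 0 := by
    have h0 : μ * (β * S * e2 * G I - (μ + d + α) * I) = 0 := by
      linear_combination (β * e2 * G I) * hμS + hψI'
    exact (mul_eq_zero.mp h0).resolve_left hμ.ne'
  refine ⟨(S, E, I), ⟨hSpos, hEpos, hI0, ?_, ?_, ?_⟩, ?_⟩
  · show B - β * S * e1 * G I - μ * S + α * I * e3 = 0
    linear_combination (-eT) * key3 - (β * S * G I) * he12 - hμS + I * hcdef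
  · show β * S * e1 * G I - μ * E - β * S * e2 * G I = 0
    linear_combination -hμE
  · show β * S * e2 * G I - (μ + d + α) * I = 0
    exact key3
  · rintro ⟨S', E', I'⟩ ⟨hS', hE', hI', q1, q2, q3⟩
    simp only at q1 q2 q3 ⊢
    have hGI' := hGpos I' hI'
    have hμS' : μ * S' = B - c * I' := by
      linear_combination -q1 - (β * S' * G I') * he12 - eT * q3 + I' * hcdef
    have hψI2 : ψ I' = 0 := by
      show β * e2 * ((B - c * I') * G I') - μ * (μ + d + α) * I' = 0
      linear_combination μ * q3 - (β * e2 * G I') * hμS'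
    have hII : I' = I := huniq I' I hI' hψI2 hI0 hψI
    subst hII
    have hSS : S' = S := by
      apply mul_left_cancel₀ hμ.ne'
      rw [hμS, hμS']
    have hEE : E' = E := by
      apply mul_left_cancel₀ hμ.ne'
      rw [hSS] at q2
      linear_combination -q2 - hμE
    rw [hSS, hEE]
end

section
/- Let G : ℝ → ℝ and g : ℝ → ℝ be such that G has derivative g(x) at every x ≥ 0, G(0) = 0, G is strictly increasing on [0,∞), and g is strictly decreasing on [0,∞). Let c, B, κ, ρ > 0 satisfy c·g(0)·B > ρ. Then there exists a unique I > 0 such that c·G(I)·(B − κ·I) = ρ·I; moreover, this I satisfies 0 < I < B/κ. -/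
open Set Filter Topology

/-- Strict concavity (from the strictly decreasing derivative) gives the strict
chord inequality `G J * I < G I * J` for `0 < I < J`, i.e. `G I / I` strictly
decreasing. -/
lemma ratio_strict_anti
    (G g : ℝ → ℝ)
    (hderiv : ∀ x ≥ (0:ℝ), HasDerivAt G (g x) x)
    (hG0 : G 0 = 0)
    (hganti : StrictAntiOn g (Set.Ici (0:ℝ)))
    {I J : ℝ} (hI : 0 < I) (hIJ : I < J) :
    G J * I < G I * J := by
  have hcont : ∀ a b : ℝ, 0 ≤ a → ContinuousOn G (Set.Icc a b) := by
    intro a b ha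
    intro x hx
    exact ((hderiv x (ha.trans hx.1)).continuousAt).continuousWithinAt
  obtain ⟨ξ, hξ, hξeq⟩ := exists_hasDerivAt_eq_slope G g hI (hcont 0 I le_rfl)
    (fun x hx => hderiv x (le_of_lt hx.1))
  obtain ⟨η, hη, hηeq⟩ := exists_hasDerivAt_eq_slope G g hIJ (hcont I J hI.le)
    (fun x hx => hderiv x (hI.le.trans (le_of_lt hx.1)))
  have hξmem : ξ ∈ Set.Ici (0:ℝ) := le_of_lt hξ.1
  have hηmem : η ∈ Set.Ici (0:ℝ) := (hI.trans hη.1).le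
  have hlt : g η < g ξ := hganti hξmem hηmem (hξ.2.trans hη.1)
  have hGI : G I = g ξ * I := by
    have hI' : I - 0 ≠ 0 := by linarith
    field_simp [hG0] at hξeq
    linarith [hξeq]
  have hGJ : G J = G I + g η * (J - I) := by
    have hJI : J - I ≠ 0 := by linarith
    field_simp at hηeq
    linarith [hηeq]
  nlinarith [mul_pos hI (sub_pos.mpr hIJ), mul_lt_mul_of_pos_right hlt
    (mul_pos hI (sub_pos.mpr hIJ))]

/-- One-dimensional root lemma underlying Theorems 5.1 and 5.2 of the paper:
the equation `c·G(I)·(B - κI) = ρI` has a unique positive root, which lies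
in `(0, B/κ)`. -/
theorem unique_positive_root
    (G g : ℝ → ℝ)
    (hderiv : ∀ x ≥ (0:ℝ), HasDerivAt G (g x) x)
    (hG0 : G 0 = 0)
    (hGmono : StrictMonoOn G (Set.Ici (0:ℝ)))
    (hganti : StrictAntiOn g (Set.Ici (0:ℝ)))
    (c B κ ρ : ℝ) (hc : 0 < c) (hB : 0 < B) (hκ : 0 < κ) (hρ : 0 < ρ)
    (hcond : ρ < c * g 0 * B) :
    ∃ I : ℝ, (0 < I ∧ c * G I * (B - κ * I) = ρ * I ∧ I < B / κ) ∧
      ∀ J : ℝ, 0 < J → c * G J * (B - κ * J) = ρ * J → J = I := by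
  have hBκ : 0 < B / κ := div_pos hB hκ
  -- slope tends to g 0 from the right
  have hslope : Tendsto (fun x => G x / x) (𝓝[>] (0:ℝ)) (𝓝 (g 0)) := by
    have h := (hasDerivAt_iff_tendsto_slope.mp (hderiv 0 le_rfl))
    have h' := h.mono_left (nhdsWithin_mono 0 (fun x hx => by
      simp only [Set.mem_compl_iff, Set.mem_singleton_iff]
      exact ne_of_gt hx))
    refine h'.congr' ?_
    filter_upwards [self_mem_nhdsWithin] with x hx
    simp [slope, hG0, div_eq_inv_mul]
  have htend : Tendsto (fun x => c * (G x / x) * (B - κ * x)) (𝓝[>] (0:ℝ))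
      (𝓝 (c * g 0 * B)) := by
    have h1 : Tendsto (fun x : ℝ => B - κ * x) (𝓝[>] (0:ℝ)) (𝓝 (B - κ * 0)) :=
      ((continuous_const.sub (continuous_const.mul continuous_id)).tendsto 0).mono_left
        nhdsWithin_le_nhds
    simpa using ((tendsto_const_nhds.mul hslope).mul h1)
  have hev : ∀ᶠ x in 𝓝[>] (0:ℝ), ρ < c * (G x / x) * (B - κ * x) :=
    htend.eventually (eventually_gt_nhds hcond)
  have hev2 : ∀ᶠ x in 𝓝[>] (0:ℝ), x ∈ Set.Ioo (0:ℝ) (B / κ) :=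
    Ioo_mem_nhdsGT_of_mem ⟨le_refl 0, hBκ⟩
  obtain ⟨a, ha1, ha2⟩ := (hev.and hev2).exists
  obtain ⟨ha0, haB⟩ := ha2
  -- F a > 0
  set F : ℝ → ℝ := fun x => c * G x * (B - κ * x) - ρ * x with hF
  have hFa : 0 < F a := by
    have := mul_lt_mul_of_pos_right ha1 ha0
    have hGa : c * (G a / a) * (B - κ * a) * a = c * G a * (B - κ * a) := by
      field_simp
    simp only [hF]
    rw [hGa] at this
    linarith
  have hFb : F (B / κ) < 0 := by
    have : κ * (B / κ) = B := mul_div_cancel₀ B (ne_of_gt hκ)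
    simp only [hF, this]
    nlinarith [mul_pos hρ hBκ]
  have hab : a < B / κ := haB
  have hFcont : ContinuousOn F (Set.Icc a (B / κ)) := by
    have hGc : ContinuousOn G (Set.Icc a (B / κ)) := fun x hx =>
      ((hderiv x (ha0.le.trans hx.1)).continuousAt).continuousWithinAt
    exact ((continuousOn_const.mul hGc).mul
      (continuous_const.sub (continuous_const.mul continuous_id)).continuousOn).sub
      (continuous_const.mul continuous_id).continuousOn
  have hmem : (0:ℝ) ∈ Set.Ioo (F (B / κ)) (F a) := ⟨hFb, hFa⟩
  obtain ⟨I, hIm, hFI⟩ := intermediate_value_Ioo' hab.le hFcont hmem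
  have hI0 : 0 < I := ha0.trans hIm.1
  have hIB : I < B / κ := hIm.2
  have hIeq : c * G I * (B - κ * I) = ρ * I := by
    have : c * G I * (B - κ * I) - ρ * I = 0 := hFI
    linarith
  -- key: no two distinct positive roots
  have key : ∀ x y : ℝ, 0 < x → x < y →
      c * G x * (B - κ * x) = ρ * x → c * G y * (B - κ * y) = ρ * y → False := by
    intro x y hx hxy ex ey
    have hGx : 0 < G x := by
      have := hGmono (Set.mem_Ici.mpr le_rfl) (Set.mem_Ici.mpr hx.le) hx
      rwa [hG0] at this
    have hGy : 0 < G y := by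
      have := hGmono (Set.mem_Ici.mpr le_rfl) (Set.mem_Ici.mpr (hx.trans hxy).le)
        (hx.trans hxy)
      rwa [hG0] at this
    have hBy : 0 < B - κ * y := by
      by_contra h
      push_neg at h
      have h1 : c * G y * (B - κ * y) ≤ 0 :=
        mul_nonpos_of_nonneg_of_nonpos (mul_pos hc hGy).le h
      have h2 : 0 < ρ * y := mul_pos hρ (hx.trans hxy)
      linarith [ey ▸ h1]
    have hBx : 0 < B - κ * x := by nlinarith
    have hratio := ratio_strict_anti G g hderiv hG0 hganti hx hxy
    -- multiply equations crosswise
    have e1 : c * G x * (B - κ * x) * y = ρ * x * y := by rw [ex]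
    have e2 : c * G y * (B - κ * y) * x = ρ * y * x := by rw [ey]
    nlinarith [mul_lt_mul_of_pos_left hratio (mul_pos hc hBy),
      mul_pos (mul_pos hc hGx) (mul_pos (hx.trans hxy) (mul_pos hκ (sub_pos.mpr hxy)))]
  refine ⟨I, ⟨hI0, hIeq, hIB⟩, ?_⟩
  intro J hJ hJeq
  rcases lt_trichotomy J I with h | h | h
  · exact absurd (key J I hJ h hJeq hIeq) (fun f => f)
  · exact h
  · exact absurd (key I J hI0 h hIeq hJeq) (fun f => f)
end
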